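/- Let H, ρ, F be as in the twist map setting, and assume additionally that |∂₁₂H(x, x')| ≤ M' for all x, x' for some M' > 0. Let g : ℝ → ℝ be continuous with g(x + 1) = g(x) for all x, and suppose the graph Γ = {(x, g(x)) : x ∈ ℝ} is invariant: F maps Γ bijectively onto Γ. Then the regions above and below the graph are invariant: if r > g(x) and F(x, r) = (x', r'), then r' > g(x'); and if r < g(x) and F(x, r) = (x', r'), then r' < g(x'). -/

import Mathlib

open Real

/-- Partial derivative of `H` in the first variable. -/
noncomputable def D1 (H : ℝ → ℝ → ℝ) (x x' : ℝ) : ℝ := deriv (fun t => H t x') x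

/-- Partial derivative of `H` in the second variable. -/
noncomputable def D2 (H : ℝ → ℝ → ℝ) (x x' : ℝ) : ℝ := deriv (fun t => H x t) x'

/-- Mixed second partial derivative `∂₁₂H` (first in the first variable, then in the
second variable). -/
noncomputable def D12 (H : ℝ → ℝ → ℝ) (x x' : ℝ) : ℝ := deriv (fun t => D1 H x t) x'

section Aux

variable {H : ℝ → ℝ → ℝ}

lemma hasDerivAt_fst (hH : ContDiff ℝ 2 (Function.uncurry H)) (x y : ℝ) :
    HasDerivAt (fun t => H t y) (fderiv ℝ (Function.uncurry H) (x, y) (1, 0)) x := by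
  have hd : HasFDerivAt (Function.uncurry H) (fderiv ℝ (Function.uncurry H) (x, y)) (x, y) :=
    (hH.differentiable two_ne_zero (x, y)).hasFDerivAt
  have hc : HasDerivAt (fun t : ℝ => ((t, y) : ℝ × ℝ)) ((1 : ℝ), (0 : ℝ)) x := by
    simpa using (hasDerivAt_id x).prodMk (hasDerivAt_const x y)
  exact hd.comp_hasDerivAt x hc

lemma hasDerivAt_snd (hH : ContDiff ℝ 2 (Function.uncurry H)) (x y : ℝ) :
    HasDerivAt (fun t => H x t) (fderiv ℝ (Function.uncurry H) (x, y) (0, 1)) y := by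
  have hd : HasFDerivAt (Function.uncurry H) (fderiv ℝ (Function.uncurry H) (x, y)) (x, y) :=
    (hH.differentiable two_ne_zero (x, y)).hasFDerivAt
  have hc : HasDerivAt (fun t : ℝ => ((x, t) : ℝ × ℝ)) ((0 : ℝ), (1 : ℝ)) y := by
    simpa using (hasDerivAt_const y x).prodMk (hasDerivAt_id y)
  exact hd.comp_hasDerivAt y hc

lemma D1_eq (hH : ContDiff ℝ 2 (Function.uncurry H)) (x y : ℝ) :
    D1 H x y = fderiv ℝ (Function.uncurry H) (x, y) (1, 0) :=
  (hasDerivAt_fst hH x y).deriv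

lemma D2_eq (hH : ContDiff ℝ 2 (Function.uncurry H)) (x y : ℝ) :
    D2 H x y = fderiv ℝ (Function.uncurry H) (x, y) (0, 1) :=
  (hasDerivAt_snd hH x y).deriv

lemma contDiff_fderiv (hH : ContDiff ℝ 2 (Function.uncurry H)) :
    ContDiff ℝ 1 (fderiv ℝ (Function.uncurry H)) :=
  hH.fderiv_right (by norm_num)

lemma hasDerivAt_D1_snd (hH : ContDiff ℝ 2 (Function.uncurry H)) (x y : ℝ) :
    HasDerivAt (fun t => D1 H x t)
      (fderiv ℝ (fderiv ℝ (Function.uncurry H)) (x, y) (0, 1) (1, 0)) y := by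
  set f' := fderiv ℝ (Function.uncurry H) with hf'
  have hd : HasFDerivAt f' (fderiv ℝ f' (x, y)) (x, y) :=
    ((contDiff_fderiv hH).differentiable one_ne_zero (x, y)).hasFDerivAt
  have hc : HasDerivAt (fun t : ℝ => ((x, t) : ℝ × ℝ)) ((0 : ℝ), (1 : ℝ)) y := by
    simpa using (hasDerivAt_const y x).prodMk (hasDerivAt_id y)
  have h1 : HasDerivAt (fun t => f' (x, t)) (fderiv ℝ f' (x, y) (0, 1)) y :=
    hd.comp_hasDerivAt y hc
  have h2 : HasDerivAt (fun t => f' (x, t) ((1 : ℝ), (0 : ℝ)))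
      (fderiv ℝ f' (x, y) (0, 1) (1, 0)) y := by
    simpa using h1.clm_apply (hasDerivAt_const y ((1 : ℝ), (0 : ℝ)))
  have he : (fun t => D1 H x t) = fun t => f' (x, t) ((1 : ℝ), (0 : ℝ)) :=
    funext fun t => D1_eq hH x t
  rw [he]
  exact h2

lemma D12_eq (hH : ContDiff ℝ 2 (Function.uncurry H)) (x y : ℝ) :
    D12 H x y = fderiv ℝ (fderiv ℝ (Function.uncurry H)) (x, y) (0, 1) (1, 0) :=
  (hasDerivAt_D1_snd hH x y).deriv

lemma hasDerivAt_D2_fst (hH : ContDiff ℝ 2 (Function.uncurry H)) (x y : ℝ) :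
    HasDerivAt (fun s => D2 H s y) (D12 H x y) x := by
  set f' := fderiv ℝ (Function.uncurry H) with hf'
  have hd : HasFDerivAt f' (fderiv ℝ f' (x, y)) (x, y) :=
    ((contDiff_fderiv hH).differentiable one_ne_zero (x, y)).hasFDerivAt
  have hc : HasDerivAt (fun s : ℝ => ((s, y) : ℝ × ℝ)) ((1 : ℝ), (0 : ℝ)) x := by
    simpa using (hasDerivAt_id x).prodMk (hasDerivAt_const x y)
  have h1 : HasDerivAt (fun s => f' (s, y)) (fderiv ℝ f' (x, y) (1, 0)) x :=
    hd.comp_hasDerivAt x hc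
  have h2 : HasDerivAt (fun s => f' (s, y) ((0 : ℝ), (1 : ℝ)))
      (fderiv ℝ f' (x, y) (1, 0) (0, 1)) x := by
    simpa using h1.clm_apply (hasDerivAt_const x ((0 : ℝ), (1 : ℝ)))
  have he : (fun s => D2 H s y) = fun s => f' (s, y) ((0 : ℝ), (1 : ℝ)) :=
    funext fun s => D2_eq hH s y
  have hsym : fderiv ℝ f' (x, y) (1, 0) (0, 1) = fderiv ℝ f' (x, y) (0, 1) (1, 0) :=
    second_derivative_symmetric
      (fun p => (hH.differentiable two_ne_zero p).hasFDerivAt) hd (1, 0) (0, 1)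
  rw [he, D12_eq hH x y, ← hsym]
  exact h2

lemma D1_periodic (hH : ContDiff ℝ 2 (Function.uncurry H))
    (hper : ∀ x x', H (x + 1) (x' + 1) = H x x') (x y : ℝ) :
    D1 H (x + 1) (y + 1) = D1 H x y := by
  have h1 : D1 H (x + 1) (y + 1) = deriv (fun t => H (t + 1) (y + 1)) x := by
    rw [D1]
    rw [deriv_comp_add_const (fun t => H t (y + 1)) 1 x]
  have h2 : (fun t => H (t + 1) (y + 1)) = fun t => H t y := funext fun t => hper t y
  rw [h1, h2]; rfl

end Aux

/-- For a positive twist map `F` generated by `H` with `∂₁₂H ≤ -ρ < 0` and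
`|∂₁₂H| ≤ M'`, and a continuous periodic invariant graph `Γ = {(x, g(x))}`, the regions
above and below the graph are invariant. -/
theorem stmt6 (H : ℝ → ℝ → ℝ) (ρ M' : ℝ) (F : ℝ × ℝ → ℝ × ℝ)
    (hH : ContDiff ℝ 2 (Function.uncurry H))
    (hper : ∀ x x', H (x + 1) (x' + 1) = H x x')
    (hρ : 0 < ρ) (htwist : ∀ x x', D12 H x x' ≤ -ρ)
    (hM' : 0 < M') (hMb : ∀ x x', |D12 H x x'| ≤ M')
    (hFbij : Function.Bijective F)
    (hFdef : ∀ x r x' r', F (x, r) = (x', r') ↔ (r = -D1 H x x' ∧ r' = D2 H x x'))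
    (g : ℝ → ℝ) (hg : Continuous g) (hgper : ∀ x, g (x + 1) = g x)
    (hinv : Set.BijOn F {p : ℝ × ℝ | p.2 = g p.1} {p : ℝ × ℝ | p.2 = g p.1}) :
    ∀ x r x' r', F (x, r) = (x', r') →
      ((g x < r → g x' < r') ∧ (r < g x → r' < g x')) := by
  -- strict monotonicity of `y ↦ -D1 H x y`
  have mono1 : ∀ x : ℝ, StrictMono (fun y => -D1 H x y) := by
    intro x
    apply strictMono_of_deriv_pos
    intro y
    have h : deriv (fun y => -D1 H x y) y = -D12 H x y := by
      rw [deriv.fun_neg]; rfl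
    rw [h]
    have := htwist x y
    linarith
  -- strict antitonicity of `s ↦ D2 H s y`
  have anti2 : ∀ y : ℝ, StrictAnti (fun s => D2 H s y) := by
    intro y
    apply strictAnti_of_deriv_neg
    intro s
    rw [(hasDerivAt_D2_fst hH s y).deriv]
    have := htwist s y
    linarith
  -- the graph map φ
  set φ : ℝ → ℝ := fun x => (F (x, g x)).1 with hφdef
  have hgraph : ∀ x : ℝ, F (x, g x) = (φ x, g (φ x)) := by
    intro x
    have hx : ((x, g x) : ℝ × ℝ) ∈ {p : ℝ × ℝ | p.2 = g p.1} := rfl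
    have h2 := hinv.mapsTo hx
    exact Prod.ext rfl h2
  have hφeq : ∀ x : ℝ, g x = -D1 H x (φ x) ∧ g (φ x) = D2 H x (φ x) := by
    intro x
    exact (hFdef x (g x) (φ x) (g (φ x))).mp (hgraph x)
  -- injectivity of φ
  have hφinj : Function.Injective φ := by
    intro a b hab
    have h : F (a, g a) = F (b, g b) := by
      rw [hgraph a, hgraph b, hab]
    have := hFbij.injective h
    exact (Prod.ext_iff.mp this).1
  -- continuity of D1 as a function of both variables
  have contD1 : Continuous (fun p : ℝ × ℝ => D1 H p.1 p.2) := by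
    have he : (fun p : ℝ × ℝ => D1 H p.1 p.2)
        = fun p : ℝ × ℝ => fderiv ℝ (Function.uncurry H) p ((1 : ℝ), (0 : ℝ)) := by
      funext p
      exact D1_eq hH p.1 p.2
    rw [he]
    exact (contDiff_fderiv hH).continuous.clm_apply continuous_const
  -- continuity of φ
  have hφcont : Continuous φ := by
    rw [continuous_iff_continuousAt]
    intro x₀
    rw [ContinuousAt, tendsto_order]
    constructor
    · intro a ha
      have hu : Continuous (fun s => g s + D1 H s a) :=
        hg.add (contD1.comp (continuous_id.prodMk continuous_const))
      have h0 : 0 < g x₀ + D1 H x₀ a := by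
        have := mono1 x₀ ha
        have hx := (hφeq x₀).1
        simp only at this
        linarith
      have hev := (hu.continuousAt (x := x₀)).eventually (eventually_gt_nhds h0)
      filter_upwards [hev] with s hs
      have hx := (hφeq s).1
      have : -D1 H s a < -D1 H s (φ s) := by linarith
      exact (mono1 s).lt_iff_lt.mp this
    · intro a ha
      have hu : Continuous (fun s => g s + D1 H s a) :=
        hg.add (contD1.comp (continuous_id.prodMk continuous_const))
      have h0 : g x₀ + D1 H x₀ a < 0 := by
        have := mono1 x₀ ha
        have hx := (hφeq x₀).1
        simp only at this
        linarith
      have hev := (hu.continuousAt (x := x₀)).eventually (eventually_lt_nhds h0)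
      filter_upwards [hev] with s hs
      have hx := (hφeq s).1
      have : -D1 H s (φ s) < -D1 H s a := by linarith
      exact (mono1 s).lt_iff_lt.mp this
  -- periodicity of φ
  have hφper : ∀ x : ℝ, φ (x + 1) = φ x + 1 := by
    intro x
    have h1 : g (x + 1) = -D1 H (x + 1) (φ (x + 1)) := (hφeq (x + 1)).1
    have h2 : g (x + 1) = -D1 H (x + 1) (φ x + 1) := by
      rw [hgper x, D1_periodic hH hper x (φ x)]
      exact (hφeq x).1
    have : -D1 H (x + 1) (φ (x + 1)) = -D1 H (x + 1) (φ x + 1) := by rw [← h1, ← h2]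
    exact (mono1 (x + 1)).injective this
  -- φ is strictly monotone
  have hφmono : StrictMono φ := by
    rcases hφcont.strictMono_of_inj hφinj with h | h
    · exact h
    · exfalso
      have h1 : φ (0 + 1) = φ 0 + 1 := hφper 0
      have h2 : φ 1 < φ 0 := h (by norm_num)
      norm_num at h1
      linarith
  -- main argument
  intro x r x' r' hF
  obtain ⟨hr, hr'⟩ := (hFdef x r x' r').mp hF
  -- the preimage of (x', g x') on the graph
  have hx'mem : ((x', g x') : ℝ × ℝ) ∈ {p : ℝ × ℝ | p.2 = g p.1} := rfl
  obtain ⟨p, hp, hFp⟩ := hinv.surjOn hx'mem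
  obtain ⟨x₀, r₀⟩ := p
  have hp' : r₀ = g x₀ := hp
  subst hp'
  have hφx₀ : φ x₀ = x' := by
    have := (hgraph x₀).symm.trans hFp
    exact (Prod.ext_iff.mp this).1
  obtain ⟨hg₀, hg'⟩ := (hFdef x₀ (g x₀) x' (g x')).mp hFp
  constructor
  · intro hlt
    -- g x < r : then φ x < x', so x < x₀, so r' = D2 H x x' > D2 H x₀ x' = g x'
    have h1 : -D1 H x (φ x) < -D1 H x x' := by
      have := (hφeq x).1
      linarith
    have h2 : φ x < x' := (mono1 x).lt_iff_lt.mp h1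
    have h3 : x < x₀ := by
      by_contra hcon
      push_neg at hcon
      have := hφmono.le_iff_le.mpr hcon
      rw [hφx₀] at this
      linarith
    have h4 : D2 H x₀ x' < D2 H x x' := anti2 x' h3
    linarith
  · intro hlt
    have h1 : -D1 H x x' < -D1 H x (φ x) := by
      have := (hφeq x).1
      linarith
    have h2 : x' < φ x := (mono1 x).lt_iff_lt.mp h1
    have h3 : x₀ < x := by
      by_contra hcon
      push_neg at hcon
      have := hφmono.le_iff_le.mpr hcon
      rw [hφx₀] at this
      linarith
    have h4 : D2 H x x' < D2 H x₀ x' := anti2 x' h3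
    linarith
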